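/- Let $X_n, X$ be real-valued random variables with $X_n \to X$ almost surely and $F_X$ continuous. Then for every $p \in [1,\infty)$, $\mathbb{E}|F_{X_n}(X_n) - F_X(X)|^p \to 0$ as $n \to \infty$. -/

import Mathlib

open MeasureTheory Filter Set

/-- Pointwise convergence of CDFs from a.s. convergence, with continuous limit CDF. -/
lemma cdf_pointwise_conv
    {Ω : Type*} [MeasurableSpace Ω] (μ : Measure Ω) [IsProbabilityMeasure μ]
    (Xn : ℕ → Ω → ℝ) (X : Ω → ℝ)
    (hXn : ∀ n, Measurable (Xn n)) (hX : Measurable X)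
    (F : ℝ → ℝ) (hF : ∀ x, F x = (μ {ω | X ω ≤ x}).toReal)
    (hFcont : Continuous F)
    (has : ∀ᵐ ω ∂μ, Tendsto (fun n => Xn n ω) atTop (nhds (X ω))) (y : ℝ) :
    Tendsto (fun n => (μ {ω | Xn n ω ≤ y}).toReal) atTop (nhds (F y)) := by
  rw [Metric.tendsto_atTop]
  intro ε hε
  -- continuity of F at y
  have hcont := (hFcont.continuousAt (x := y))
  rw [Metric.continuousAt_iff] at hcont
  obtain ⟨δ, hδ, hδ'⟩ := hcont (ε / 3) (by linarith)
  set d := δ / 2 with hd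
  have hd0 : 0 < d := by positivity
  have hplus : |F (y + d) - F y| < ε / 3 := by
    apply hδ'
    simp only [Real.dist_eq, add_sub_cancel_left, abs_of_pos hd0]
    linarith
  have hminus : |F (y - d) - F y| < ε / 3 := by
    apply hδ'
    simp only [Real.dist_eq]
    rw [show y - d - y = -d by ring, abs_neg, abs_of_pos hd0]
    linarith
  -- the "bad" sets
  set C : ℕ → Set Ω := fun N => ⋃ m, ⋃ (_ : N ≤ m), {ω | d < |Xn m ω - X ω|} with hC
  have hCmeas : ∀ N, MeasurableSet (C N) := by
    intro N
    refine MeasurableSet.iUnion fun m => MeasurableSet.iUnion fun _ => ?_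
    exact measurableSet_lt measurable_const (((hXn m).sub hX).abs)
  have hCanti : Antitone C := by
    intro a b hab
    refine iUnion_mono fun m => ?_
    exact iUnion_subset fun h => subset_iUnion_of_subset (le_trans hab h) (subset_refl _)
  have hCnull : μ (⋂ N, C N) = 0 := by
    rw [ae_iff] at has
    refine measure_mono_null ?_ has
    intro ω hω
    simp only [mem_iInter, hC, mem_iUnion, mem_setOf_eq] at hω
    simp only [mem_setOf_eq]
    intro htend
    obtain ⟨N, hN⟩ := (Metric.tendsto_atTop.mp htend) d hd0
    obtain ⟨m, hm, hm'⟩ := hω N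
    exact absurd hm' (not_lt.mpr (le_of_lt (by simpa [Real.dist_eq] using hN m hm)))
  have hCtend : Tendsto (fun N => (μ (C N)).toReal) atTop (nhds 0) := by
    have h1 : Tendsto (fun N => μ (C N)) atTop (nhds (μ (⋂ N, C N))) :=
      tendsto_measure_iInter_atTop (fun i => (hCmeas i).nullMeasurableSet) hCanti ⟨0, measure_ne_top μ _⟩
    rw [hCnull] at h1
    have := (ENNReal.tendsto_toReal (by simp : (0 : ENNReal) ≠ ⊤)).comp h1
    simpa [Function.comp_def] using this
  obtain ⟨N, hN⟩ := (Metric.tendsto_atTop.mp hCtend) (ε / 3) (by linarith)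
  have hCN : (μ (C N)).toReal < ε / 3 := by
    have := hN N le_rfl
    rw [Real.dist_eq, sub_zero, abs_of_nonneg ENNReal.toReal_nonneg] at this
    exact this
  refine ⟨N, fun n hn => ?_⟩
  have hnotC : ∀ ω, ω ∉ C N → |Xn n ω - X ω| ≤ d := by
    intro ω hω
    by_contra h
    exact hω (mem_iUnion.mpr ⟨n, mem_iUnion.mpr ⟨hn, not_le.mp h⟩⟩)
  -- upper bound
  have hub : ({ω | Xn n ω ≤ y} : Set Ω) ⊆ {ω | X ω ≤ y + d} ∪ C N := by
    intro ω hω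
    by_cases hc : ω ∈ C N
    · exact Or.inr hc
    · left
      have := hnotC ω hc
      have h1 : X ω - Xn n ω ≤ d := by
        have := abs_le.mp this
        linarith [this.1]
      simp only [mem_setOf_eq] at hω ⊢
      linarith
  have hlb : ({ω | X ω ≤ y - d} : Set Ω) ⊆ {ω | Xn n ω ≤ y} ∪ C N := by
    intro ω hω
    by_cases hc : ω ∈ C N
    · exact Or.inr hc
    · left
      have := abs_le.mp (hnotC ω hc)
      simp only [mem_setOf_eq] at hω ⊢
      linarith [this.1]
  have key : ∀ (A B : Set Ω), A ⊆ B ∪ C N →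
      (μ A).toReal ≤ (μ B).toReal + (μ (C N)).toReal := by
    intro A B hAB
    have h1 : μ A ≤ μ B + μ (C N) := le_trans (measure_mono hAB) (measure_union_le _ _)
    have h2 := ENNReal.toReal_mono
      (by exact ENNReal.add_ne_top.mpr ⟨measure_ne_top μ _, measure_ne_top μ _⟩) h1
    rwa [ENNReal.toReal_add (measure_ne_top μ _) (measure_ne_top μ _)] at h2
  have hub' : (μ {ω | Xn n ω ≤ y}).toReal ≤ F (y + d) + (μ (C N)).toReal := by
    have := key _ _ hub
    rwa [← hF (y + d)] at this
  have hlb' : F (y - d) ≤ (μ {ω | Xn n ω ≤ y}).toReal + (μ (C N)).toReal := by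
    have := key _ _ hlb
    rwa [← hF (y - d)] at this
  have h1 := abs_lt.mp hplus
  have h2 := abs_lt.mp hminus
  rw [Real.dist_eq, abs_lt]
  constructor <;> [skip; skip]
  · linarith [h2.1]
  · linarith [h1.2]

/-- If `Xₙ → X` almost surely and the CDF of `X` is continuous, then for every
`p ∈ [1,∞)`, `𝔼|F_{Xₙ}(Xₙ) - F_X(X)|^p → 0`. -/
theorem stmt_3
    {Ω : Type*} [MeasurableSpace Ω] (μ : Measure Ω) [IsProbabilityMeasure μ]
    (Xn : ℕ → Ω → ℝ) (X : Ω → ℝ)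
    (hXn : ∀ n, Measurable (Xn n)) (hX : Measurable X)
    (Fn : ℕ → ℝ → ℝ) (hFn : ∀ n x, Fn n x = (μ {ω | Xn n ω ≤ x}).toReal)
    (F : ℝ → ℝ) (hF : ∀ x, F x = (μ {ω | X ω ≤ x}).toReal)
    (hFcont : Continuous F)
    (has : ∀ᵐ ω ∂μ, Tendsto (fun n => Xn n ω) atTop (nhds (X ω))) :
    ∀ p : ℝ, 1 ≤ p →
      Tendsto (fun n => ∫ ω, |Fn n (Xn n ω) - F (X ω)| ^ p ∂μ) atTop (nhds 0) := by
  intro p hp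
  have hp0 : 0 < p := lt_of_lt_of_le one_pos hp
  -- Fn is monotone, values in [0,1]
  have hFnmono : ∀ n, Monotone (Fn n) := by
    intro n x x' hxx'
    rw [hFn, hFn]
    exact ENNReal.toReal_mono (measure_ne_top μ _)
      (measure_mono fun ω h => le_trans h hxx')
  have hFn01 : ∀ n x, 0 ≤ Fn n x ∧ Fn n x ≤ 1 := by
    intro n x
    rw [hFn]
    refine ⟨ENNReal.toReal_nonneg, ?_⟩
    have := prob_le_one (μ := μ) (s := {ω | Xn n ω ≤ x})
    calc (μ {ω | Xn n ω ≤ x}).toReal ≤ (1 : ENNReal).toReal :=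
          ENNReal.toReal_mono (by simp) this
      _ = 1 := by simp
  have hF01 : ∀ x, 0 ≤ F x ∧ F x ≤ 1 := by
    intro x
    rw [hF]
    refine ⟨ENNReal.toReal_nonneg, ?_⟩
    have := prob_le_one (μ := μ) (s := {ω | X ω ≤ x})
    calc (μ {ω | X ω ≤ x}).toReal ≤ (1 : ENNReal).toReal :=
          ENNReal.toReal_mono (by simp) this
      _ = 1 := by simp
  -- pointwise CDF convergence
  have hptw : ∀ y, Tendsto (fun n => Fn n y) atTop (nhds (F y)) := by
    intro y
    have := cdf_pointwise_conv μ Xn X hXn hX F hF hFcont has y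
    simpa [hFn] using this
  -- a.e. pointwise convergence of Fn n (Xn n ω) → F (X ω)
  have haeconv : ∀ᵐ ω ∂μ, Tendsto (fun n => Fn n (Xn n ω)) atTop (nhds (F (X ω))) := by
    filter_upwards [has] with ω hω
    rw [Metric.tendsto_atTop]
    intro ε hε
    have hcont := hFcont.continuousAt (x := X ω)
    rw [Metric.continuousAt_iff] at hcont
    obtain ⟨δ, hδ, hδ'⟩ := hcont (ε / 3) (by linarith)
    set d := δ / 2 with hdd
    have hd0 : 0 < d := by positivity
    have hplus : |F (X ω + d) - F (X ω)| < ε / 3 := by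
      apply hδ'
      simp only [Real.dist_eq, add_sub_cancel_left, abs_of_pos hd0]
      linarith
    have hminus : |F (X ω - d) - F (X ω)| < ε / 3 := by
      apply hδ'
      simp only [Real.dist_eq]
      rw [show X ω - d - X ω = -d by ring, abs_neg, abs_of_pos hd0]
      linarith
    obtain ⟨N1, hN1⟩ := (Metric.tendsto_atTop.mp hω) d hd0
    obtain ⟨N2, hN2⟩ := (Metric.tendsto_atTop.mp (hptw (X ω + d))) (ε / 3) (by linarith)
    obtain ⟨N3, hN3⟩ := (Metric.tendsto_atTop.mp (hptw (X ω - d))) (ε / 3) (by linarith)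
    refine ⟨max N1 (max N2 N3), fun n hn => ?_⟩
    have hn1 : N1 ≤ n := le_trans (le_max_left _ _) hn
    have hn2 : N2 ≤ n := le_trans (le_trans (le_max_left _ _) (le_max_right _ _)) hn
    have hn3 : N3 ≤ n := le_trans (le_trans (le_max_right _ _) (le_max_right _ _)) hn
    have hx := abs_lt.mp (by simpa [Real.dist_eq] using hN1 n hn1)
    have hle1 : Fn n (Xn n ω) ≤ Fn n (X ω + d) := hFnmono n (by linarith [hx.2])
    have hle2 : Fn n (X ω - d) ≤ Fn n (Xn n ω) := hFnmono n (by linarith [hx.1])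
    have hu := abs_lt.mp (by simpa [Real.dist_eq] using hN2 n hn2)
    have hl := abs_lt.mp (by simpa [Real.dist_eq] using hN3 n hn3)
    have h1 := abs_lt.mp hplus
    have h2 := abs_lt.mp hminus
    rw [Real.dist_eq, abs_lt]
    constructor
    · linarith [hl.1, h2.1]
    · linarith [hu.2, h1.2]
  -- measurability
  have hmeas : ∀ n, AEStronglyMeasurable (fun ω => |Fn n (Xn n ω) - F (X ω)| ^ p) μ := by
    intro n
    have h1 : Measurable (Fn n) := (hFnmono n).measurable
    have h2 : Measurable fun ω => |Fn n (Xn n ω) - F (X ω)| :=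
      ((h1.comp (hXn n)).sub (hFcont.measurable.comp hX)).abs
    exact ((Real.continuous_rpow_const (le_of_lt hp0)).measurable.comp h2).aestronglyMeasurable
  -- dominated convergence
  have hres := tendsto_integral_of_dominated_convergence (μ := μ)
      (F := fun n ω => |Fn n (Xn n ω) - F (X ω)| ^ p) (f := fun _ => (0 : ℝ))
      (bound := fun _ => (1 : ℝ)) hmeas (integrable_const 1)
      (by
        intro n
        filter_upwards with ω
        have hd1 : |Fn n (Xn n ω) - F (X ω)| ≤ 1 := by
          rw [abs_sub_le_iff]
          constructor
          · linarith [(hFn01 n (Xn n ω)).2, (hF01 (X ω)).1]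
          · linarith [(hF01 (X ω)).2, (hFn01 n (Xn n ω)).1]
        have : (0:ℝ) ≤ |Fn n (Xn n ω) - F (X ω)| ^ p :=
          Real.rpow_nonneg (abs_nonneg _) p
        rw [Real.norm_eq_abs, abs_of_nonneg this]
        exact Real.rpow_le_one (abs_nonneg _) hd1 (le_of_lt hp0))
      (by
        filter_upwards [haeconv] with ω hω
        have h0 : Tendsto (fun n => |Fn n (Xn n ω) - F (X ω)|) atTop (nhds 0) := by
          have := (hω.sub (tendsto_const_nhds (x := F (X ω)))).abs
          simpa using this
        have hc : ContinuousAt (fun x : ℝ => x ^ p) 0 :=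
          Real.continuousAt_rpow_const 0 p (Or.inr (le_of_lt hp0))
        have := hc.tendsto.comp h0
        simpa [Real.zero_rpow (ne_of_gt hp0), Function.comp_def] using this)
  simpa using hres
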